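/- arXiv:1309.7981 — 2 statements merged into one kernel-verified Lean document; each statement's English description precedes it below -/
import Mathlib

section
/- Let (Γ, μ) be a σ-finite measure space, τ : Γ → (0,∞) measurable, and h : Γ × ℝ → ℝ jointly measurable such that for μ-almost every γ ∈ Γ the function t ↦ h(γ,t) is differentiable at every point of [0, τ(γ)] with derivative ∂ₜh(γ,t), and h(γ,·), ∂ₜh(γ,·) are integrable on [0, τ(γ)]. Then ∫_Γ |h(γ,0)| dμ(γ) ≤ ∫_Γ ∫₀^{τ(γ)} |∂ₜh(γ,t)| dt dμ(γ) + ∫_Γ ∫₀^{τ(γ)} (1/τ(γ)) |h(γ,t)| dt dμ(γ), where all integrals are Lebesgue integrals with values in [0,∞]. -/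
open MeasureTheory Set ENNReal

/-- Trajectory-coordinate form of the boundary trace estimate
`‖f|_{∂±SM}‖_{L¹(∂±SM)} ≤ ‖f‖_𝒲`. -/
theorem trace_estimate_trajectory {Γ : Type*} [MeasurableSpace Γ]
    (μ : Measure Γ) [SigmaFinite μ]
    (τ : Γ → ℝ) (hτ_meas : Measurable τ) (hτ_pos : ∀ γ, 0 < τ γ)
    (h h' : Γ → ℝ → ℝ) (h_meas : Measurable (Function.uncurry h))
    (hderiv : ∀ᵐ γ ∂μ, ∀ t ∈ Set.Icc (0 : ℝ) (τ γ), HasDerivAt (h γ) (h' γ t) t)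
    (hint : ∀ᵐ γ ∂μ, IntegrableOn (h γ) (Set.Icc 0 (τ γ))
      ∧ IntegrableOn (h' γ) (Set.Icc 0 (τ γ))) :
    ∫⁻ γ, ENNReal.ofReal |h γ 0| ∂μ ≤
      (∫⁻ γ, (∫⁻ t in Set.Ioc 0 (τ γ), ENNReal.ofReal |h' γ t|) ∂μ) +
        ∫⁻ γ, (∫⁻ t in Set.Ioc 0 (τ γ), ENNReal.ofReal ((1 / τ γ) * |h γ t|)) ∂μ := by
  set A : Γ → ℝ≥0∞ := fun γ => ∫⁻ t in Set.Ioc 0 (τ γ), ENNReal.ofReal |h' γ t| with hA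
  set B : Γ → ℝ≥0∞ := fun γ => ∫⁻ t in Set.Ioc 0 (τ γ), ENNReal.ofReal ((1 / τ γ) * |h γ t|)
    with hB
  have key : ∀ᵐ γ ∂μ, ENNReal.ofReal |h γ 0| ≤ A γ + B γ := by
    filter_upwards [hderiv, hint] with γ hd ⟨hih, hih'⟩
    have hτ := hτ_pos γ
    have hIoc : Set.Ioc (0:ℝ) (τ γ) ⊆ Set.Icc 0 (τ γ) := Set.Ioc_subset_Icc_self
    have hih'Ioc : IntegrableOn (h' γ) (Set.Ioc 0 (τ γ)) := hih'.mono_set hIoc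
    -- A γ as a real integral
    have hA_eq : ENNReal.ofReal (∫ t in Set.Ioc 0 (τ γ), |h' γ t|) = A γ := by
      rw [hA, ofReal_integral_eq_lintegral_ofReal hih'Ioc.abs
        (Filter.Eventually.of_forall fun t => abs_nonneg _)]
    -- Step 1: pointwise bound for t ∈ Ioc 0 (τ γ)
    have step1 : ∀ t ∈ Set.Ioc (0:ℝ) (τ γ),
        ENNReal.ofReal |h γ 0| ≤ ENNReal.ofReal |h γ t| + A γ := by
      intro t ht
      have ht0 : (0:ℝ) ≤ t := ht.1.le
      have hIcc : Set.Icc (0:ℝ) t ⊆ Set.Icc 0 (τ γ) :=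
        Set.Icc_subset_Icc le_rfl ht.2
      have hftc : ∫ s in (0:ℝ)..t, h' γ s = h γ t - h γ 0 :=
        intervalIntegral.integral_eq_sub_of_hasDerivAt
          (fun s hs => hd s (hIcc ((Set.uIcc_of_le ht0) ▸ hs)))
          ((hih'.mono_set (by rw [Set.uIcc_of_le ht0]; exact hIcc)).intervalIntegrable)
      have hb1 : |h γ 0| ≤ |h γ t| + |∫ s in (0:ℝ)..t, h' γ s| := by
        rw [hftc]
        have := abs_sub_abs_le_abs_sub (h γ 0) (h γ t)
        have h2 : |h γ 0 - h γ t| = |h γ t - h γ 0| := abs_sub_comm _ _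
        linarith [abs_sub_abs_le_abs_sub (h γ 0) (h γ t), abs_nonneg (h γ t - h γ 0)]
      have hb2 : |∫ s in (0:ℝ)..t, h' γ s| ≤ ∫ s in Set.Ioc 0 (τ γ), |h' γ s| := by
        calc |∫ s in (0:ℝ)..t, h' γ s| ≤ ∫ s in (0:ℝ)..t, |h' γ s| :=
              intervalIntegral.abs_integral_le_integral_abs ht0
          _ = ∫ s in Set.Ioc 0 t, |h' γ s| := by
              rw [intervalIntegral.integral_of_le ht0]
          _ ≤ ∫ s in Set.Ioc 0 (τ γ), |h' γ s| := by
              apply setIntegral_mono_set hih'Ioc.abs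
                (Filter.Eventually.of_forall fun s => abs_nonneg _)
              exact Filter.Eventually.of_forall (Set.Ioc_subset_Ioc le_rfl ht.2)
      calc ENNReal.ofReal |h γ 0|
          ≤ ENNReal.ofReal (|h γ t| + ∫ s in Set.Ioc 0 (τ γ), |h' γ s|) :=
            ENNReal.ofReal_le_ofReal (by linarith)
        _ ≤ ENNReal.ofReal |h γ t| + ENNReal.ofReal (∫ s in Set.Ioc 0 (τ γ), |h' γ s|) :=
            ENNReal.ofReal_add_le
        _ = ENNReal.ofReal |h γ t| + A γ := by rw [hA_eq]
    -- Step 2: integrate over t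
    set B' : ℝ≥0∞ := ∫⁻ t in Set.Ioc 0 (τ γ), ENNReal.ofReal |h γ t| with hB'
    have hT : ENNReal.ofReal (τ γ) * ENNReal.ofReal (1 / τ γ) = 1 := by
      rw [← ENNReal.ofReal_mul hτ.le, mul_one_div_cancel hτ.ne', ENNReal.ofReal_one]
    have step2 : ENNReal.ofReal |h γ 0| * ENNReal.ofReal (τ γ) ≤ B' + A γ * ENNReal.ofReal (τ γ) := by
      have := lintegral_mono_ae ((ae_restrict_iff' measurableSet_Ioc).2
        (Filter.Eventually.of_forall step1) :
        ∀ᵐ t ∂(volume.restrict (Set.Ioc 0 (τ γ))),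
          (fun _ => ENNReal.ofReal |h γ 0|) t ≤ ENNReal.ofReal |h γ t| + A γ)
      calc ENNReal.ofReal |h γ 0| * ENNReal.ofReal (τ γ)
          = ∫⁻ _ in Set.Ioc 0 (τ γ), ENNReal.ofReal |h γ 0| := by
            rw [setLIntegral_const, Real.volume_Ioc, sub_zero]
        _ ≤ ∫⁻ t in Set.Ioc 0 (τ γ), (ENNReal.ofReal |h γ t| + A γ) := this
        _ = B' + ∫⁻ _ in Set.Ioc 0 (τ γ), A γ := lintegral_add_right _ measurable_const
        _ = B' + A γ * ENNReal.ofReal (τ γ) := by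
            rw [setLIntegral_const, Real.volume_Ioc, sub_zero]
    have hBeq : B γ = ENNReal.ofReal (1 / τ γ) * B' := by
      rw [hB, hB', ← lintegral_const_mul' _ _ ENNReal.ofReal_ne_top]
      simp_rw [← ENNReal.ofReal_mul (by positivity : (0:ℝ) ≤ 1 / τ γ)]
    calc ENNReal.ofReal |h γ 0|
        = ENNReal.ofReal |h γ 0| * ENNReal.ofReal (τ γ) * ENNReal.ofReal (1 / τ γ) := by
          rw [mul_assoc, hT, mul_one]
      _ ≤ (B' + A γ * ENNReal.ofReal (τ γ)) * ENNReal.ofReal (1 / τ γ) :=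
          mul_le_mul_left step2 _
      _ = ENNReal.ofReal (1 / τ γ) * B' + A γ * (ENNReal.ofReal (τ γ) * ENNReal.ofReal (1 / τ γ)) := by
          ring
      _ = A γ + B γ := by rw [hT, mul_one, hBeq, add_comm]
  have hB_meas : Measurable B := by
    have hg : Measurable (fun p : Γ × ℝ =>
        ({p : Γ × ℝ | 0 < p.2 ∧ p.2 ≤ τ p.1}).indicator
          (fun p => ENNReal.ofReal ((1 / τ p.1) * |h p.1 p.2|)) p) := by
      apply Measurable.indicator
      · exact ENNReal.measurable_ofReal.comp
          (((measurable_const.div (hτ_meas.comp measurable_fst)).mul h_meas.abs))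
      · exact MeasurableSet.inter (measurable_snd measurableSet_Ioi)
          (measurableSet_le measurable_snd (hτ_meas.comp measurable_fst))
    have : B = fun γ => ∫⁻ t, ({p : Γ × ℝ | 0 < p.2 ∧ p.2 ≤ τ p.1}).indicator
        (fun p => ENNReal.ofReal ((1 / τ p.1) * |h p.1 p.2|)) (γ, t) := by
      funext γ
      simp only [hB]
      rw [← lintegral_indicator measurableSet_Ioc]
      refine lintegral_congr fun t => ?_
      by_cases ht : t ∈ Set.Ioc (0:ℝ) (τ γ)
      · rw [Set.indicator_of_mem ht,
          Set.indicator_of_mem (show (γ, t) ∈ {p : Γ × ℝ | 0 < p.2 ∧ p.2 ≤ τ p.1} from ht)]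
      · rw [Set.indicator_of_notMem ht,
          Set.indicator_of_notMem (show (γ, t) ∉ {p : Γ × ℝ | 0 < p.2 ∧ p.2 ≤ τ p.1} from ht)]
    rw [this]
    exact hg.lintegral_prod_right'
  calc ∫⁻ γ, ENNReal.ofReal |h γ 0| ∂μ ≤ ∫⁻ γ, (A γ + B γ) ∂μ := lintegral_mono_ae key
    _ = ∫⁻ γ, A γ ∂μ + ∫⁻ γ, B γ ∂μ := lintegral_add_right _ hB_meas
end

section
/- Let (Γ, μ) be a σ-finite measure space, τ : Γ → (0,∞) measurable with τ(γ) ≤ T₀ for μ-a.e. γ, and σ : Γ × ℝ → [0,∞) jointly measurable with σ(γ,t) ≤ S₀ for a.e. (γ,t), where S₀, T₀ are finite constants. Let f : Γ × ℝ → ℝ be jointly measurable with ∫_Γ ∫₀^{τ(γ)} |f(γ,t)| dt dμ(γ) < ∞. Then ∫_Γ ∫₀^{τ(γ)} ( ∫ₜ^{τ(γ)} σ(γ,s) · exp(−∫ₜˢ σ(γ,u) du) ds ) · |f(γ,t)| dt dμ(γ) ≤ (1 − e^{−S₀T₀}) · ∫_Γ ∫₀^{τ(γ)} |f(γ,t)|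 dt dμ(γ). -/
open MeasureTheory Set

open Real
open scoped ENNReal


lemma key (σ : ℝ → ℝ) (hm : Measurable σ) (S : ℝ) (h0 : ∀ s, 0 ≤ σ s) (hS : ∀ s, σ s ≤ S)
    (t τ : ℝ) (ht : t ≤ τ) :
    ∫ s in t..τ, σ s * Real.exp (-(∫ u in t..s, σ u)) ≤
      1 - Real.exp (-(∫ u in t..τ, σ u)) := by
  have hii : ∀ a b : ℝ, IntervalIntegrable σ volume a b := fun a b =>
    (intervalIntegrable_const (c := S)).mono_fun' hm.aestronglyMeasurable
      (Filter.Eventually.of_forall fun s => by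
        simp only [Real.norm_eq_abs, abs_of_nonneg (h0 s)]; exact hS s)
  set F : ℝ → ℝ := fun s => ∫ u in t..s, σ u with hFdef
  have hFsub : ∀ a b : ℝ, F b - F a = ∫ u in a..b, σ u := by
    intro a b
    have := intervalIntegral.integral_add_adjacent_intervals (hii t a) (hii a b)
    simp only [hFdef]
    linarith [this]
  have hFmono : Monotone F := by
    intro a b hab
    have h2 := hFsub a b
    have h3 : (0:ℝ) ≤ ∫ u in a..b, σ u :=
      intervalIntegral.integral_nonneg hab (fun u _ => h0 u)
    linarith
  have hFcont : Continuous F := intervalIntegral.continuous_primitive hii t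
  have hFt : F t = 0 := intervalIntegral.integral_same
  have hFnonneg : ∀ s, t ≤ s → 0 ≤ F s := fun s hs => hFt ▸ hFmono hs
  set A : ℝ := F τ with hAdef
  have hA0 : 0 ≤ A := hFnonneg τ ht
  -- the two-variable kernel
  set g : ℝ × ℝ → ℝ≥0∞ := fun p =>
    if F p.1 < p.2 then ENNReal.ofReal (σ p.1) * ENNReal.ofReal (Real.exp (-p.2)) else 0
    with hgdef
  have hgmeas : Measurable g := by
    apply Measurable.ite
    · exact measurableSet_lt (hFcont.measurable.comp measurable_fst) measurable_snd
    · exact ((ENNReal.measurable_ofReal.comp (hm.comp measurable_fst)).mul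
        (ENNReal.measurable_ofReal.comp
          ((Real.continuous_exp.measurable).comp measurable_snd.neg)))
    · exact measurable_const
  -- integrability of exp(-x) on Ioi a
  have hexpint : ∀ a : ℝ, IntegrableOn (fun x => Real.exp (-x)) (Ioi a) volume := by
    intro a
    have := exp_neg_integrableOn_Ioi a one_pos
    simpa [neg_one_mul] using this
  -- step 1 : pointwise in s
  have step1 : ∀ s ∈ Ioc t τ,
      (∫⁻ x in Ioi (0:ℝ), g (s, x)) = ENNReal.ofReal (σ s * Real.exp (-(F s))) := by
    intro s hs
    have hFs : 0 ≤ F s := hFnonneg s hs.1.le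
    have hind : ∀ x : ℝ, g (s, x)
        = (Ioi (F s)).indicator (fun x => ENNReal.ofReal (σ s) * ENNReal.ofReal (Real.exp (-x))) x := by
      intro x
      simp only [hgdef, Set.indicator_apply, mem_Ioi]
    calc (∫⁻ x in Ioi (0:ℝ), g (s, x))
        = ∫⁻ x in Ioi (0:ℝ),
            (Ioi (F s)).indicator (fun x => ENNReal.ofReal (σ s) * ENNReal.ofReal (Real.exp (-x))) x := by
          simp only [hind]
      _ = ∫⁻ x in Ioi (F s) ∩ Ioi 0, ENNReal.ofReal (σ s) * ENNReal.ofReal (Real.exp (-x)) := by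
          rw [lintegral_indicator measurableSet_Ioi, Measure.restrict_restrict measurableSet_Ioi]
      _ = ∫⁻ x in Ioi (F s), ENNReal.ofReal (σ s) * ENNReal.ofReal (Real.exp (-x)) := by
          rw [Set.Ioi_inter_Ioi, sup_of_le_left hFs]
      _ = ENNReal.ofReal (σ s) * ∫⁻ x in Ioi (F s), ENNReal.ofReal (Real.exp (-x)) := by
          rw [lintegral_const_mul]
          exact ENNReal.measurable_ofReal.comp ((Real.continuous_exp.measurable).comp measurable_neg)
      _ = ENNReal.ofReal (σ s) * ENNReal.ofReal (Real.exp (-(F s))) := by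
          rw [← ofReal_integral_eq_lintegral_ofReal (hexpint (F s))
            (Filter.Eventually.of_forall fun x => (Real.exp_pos _).le), integral_exp_neg_Ioi]
      _ = ENNReal.ofReal (σ s * Real.exp (-(F s))) := (ENNReal.ofReal_mul (h0 s)).symm
  -- step 2 : pointwise in x
  have hσE : ∀ (E : Set ℝ), MeasurableSet E → ∀ a b : ℝ, a ≤ b → E ⊆ Ioc a b →
      (∫⁻ s in E, ENNReal.ofReal (σ s)) ≤ ENNReal.ofReal (F b - F a) := by
    intro E hE a b hab hsub
    calc (∫⁻ s in E, ENNReal.ofReal (σ s))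
        ≤ ∫⁻ s in Ioc a b, ENNReal.ofReal (σ s) := lintegral_mono_set hsub
      _ = ENNReal.ofReal (∫ s in Ioc a b, σ s) :=
          (ofReal_integral_eq_lintegral_ofReal (hii a b).1
            (Filter.Eventually.of_forall fun s => h0 s)).symm
      _ = ENNReal.ofReal (F b - F a) := by
          rw [hFsub a b, intervalIntegral.integral_of_le hab]
  have step2 : ∀ x ∈ Ioi (0:ℝ),
      (∫⁻ s in Ioc t τ, g (s, x)) ≤ ENNReal.ofReal (Real.exp (-x) * min x A) := by
    intro x hx
    have hx0 : (0:ℝ) < x := hx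
    have hind : ∀ s : ℝ, g (s, x)
        = {s : ℝ | F s < x}.indicator
            (fun s => ENNReal.ofReal (Real.exp (-x)) * ENNReal.ofReal (σ s)) s := by
      intro s
      simp only [hgdef, Set.indicator_apply, Set.mem_setOf_eq, mul_comm]
    have hFxmeas : MeasurableSet {s : ℝ | F s < x} :=
      measurableSet_lt hFcont.measurable measurable_const
    -- the sublevel set bound
    have hboundA : (∫⁻ s in {s : ℝ | F s < x} ∩ Ioc t τ, ENNReal.ofReal (σ s))
        ≤ ENNReal.ofReal A := by
      have := hσE _ (hFxmeas.inter measurableSet_Ioc) t τ ht inter_subset_right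
      simpa [hFt] using this
    have hboundx : (∫⁻ s in {s : ℝ | F s < x} ∩ Ioc t τ, ENNReal.ofReal (σ s))
        ≤ ENNReal.ofReal x := by
      set E' : Set ℝ := {s | s ∈ Icc t τ ∧ F s ≤ x} with hE'def
      have hne : E'.Nonempty := ⟨t, ⟨⟨le_refl t, ht⟩, by rw [hFt]; exact hx0.le⟩⟩
      have hbdd : BddAbove E' := BddAbove.mono (fun s hs => hs.1) bddAbove_Icc
      set s' : ℝ := sSup E' with hs'def
      have hs'mem : s' ∈ closure E' := csSup_mem_closure hne hbdd
      have hFs' : F s' ≤ x := by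
        have hclosed : IsClosed {s : ℝ | F s ≤ x} :=
          isClosed_le hFcont continuous_const
        have := closure_minimal (fun s (hs : s ∈ E') => hs.2) hclosed hs'mem
        exact this
      have hts' : t ≤ s' := le_csSup hbdd ⟨⟨le_refl t, ht⟩, by rw [hFt]; exact hx0.le⟩
      have hsub : {s : ℝ | F s < x} ∩ Ioc t τ ⊆ Ioc t s' := by
        rintro s ⟨h1, h2⟩
        exact ⟨h2.1, le_csSup hbdd ⟨⟨h2.1.le, h2.2⟩, le_of_lt h1⟩⟩
      calc (∫⁻ s in {s : ℝ | F s < x} ∩ Ioc t τ, ENNReal.ofReal (σ s))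
          ≤ ENNReal.ofReal (F s' - F t) :=
            hσE _ (hFxmeas.inter measurableSet_Ioc) t s' hts' hsub
        _ ≤ ENNReal.ofReal x := by
            apply ENNReal.ofReal_le_ofReal; rw [hFt]; linarith
    have hboundmin : (∫⁻ s in {s : ℝ | F s < x} ∩ Ioc t τ, ENNReal.ofReal (σ s))
        ≤ ENNReal.ofReal (min x A) := by
      rcases le_total x A with h | h
      · rw [min_eq_left h]; exact hboundx
      · rw [min_eq_right h]; exact hboundA
    calc (∫⁻ s in Ioc t τ, g (s, x))
        = ∫⁻ s in Ioc t τ, {s : ℝ | F s < x}.indicator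
            (fun s => ENNReal.ofReal (Real.exp (-x)) * ENNReal.ofReal (σ s)) s := by
          simp only [hind]
      _ = ∫⁻ s in {s : ℝ | F s < x} ∩ Ioc t τ,
            ENNReal.ofReal (Real.exp (-x)) * ENNReal.ofReal (σ s) := by
          rw [lintegral_indicator hFxmeas, Measure.restrict_restrict hFxmeas]
      _ = ENNReal.ofReal (Real.exp (-x)) *
            ∫⁻ s in {s : ℝ | F s < x} ∩ Ioc t τ, ENNReal.ofReal (σ s) := by
          rw [lintegral_const_mul]
          exact ENNReal.measurable_ofReal.comp hm
      _ ≤ ENNReal.ofReal (Real.exp (-x)) * ENNReal.ofReal (min x A) :=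
          mul_le_mul_right hboundmin _
      _ = ENNReal.ofReal (Real.exp (-x) * min x A) :=
          (ENNReal.ofReal_mul (Real.exp_pos _).le).symm
  -- the explicit integral computation
  have hminint : IntegrableOn (fun x => Real.exp (-x) * min x A) (Ioi 0) volume := by
    apply Integrable.mono' ((hexpint 0).mul_const A)
    · exact ((Real.continuous_exp.comp continuous_neg).mul
        (continuous_id.min continuous_const)).aestronglyMeasurable
    · filter_upwards [ae_restrict_mem measurableSet_Ioi] with x hx
      have h1 : 0 ≤ min x A := le_min (le_of_lt hx) hA0
      rw [Real.norm_eq_abs, abs_of_nonneg (mul_nonneg (Real.exp_pos _).le h1)]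
      exact mul_le_mul_of_nonneg_left (min_le_right _ _) (Real.exp_pos _).le
  have hcalc : (∫ x in Ioi (0:ℝ), Real.exp (-x) * min x A) = 1 - Real.exp (-A) := by
    have hsplit : Ioi (0:ℝ) = Ioc 0 A ∪ Ioi A := (Ioc_union_Ioi_eq_Ioi hA0).symm
    rw [hsplit] at hminint ⊢
    rw [setIntegral_union (Ioc_disjoint_Ioi le_rfl) measurableSet_Ioi
      (hminint.mono_set subset_union_left) (hminint.mono_set subset_union_right)]
    have e1 : (∫ x in Ioc (0:ℝ) A, Real.exp (-x) * min x A)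
        = ∫ x in Ioc (0:ℝ) A, Real.exp (-x) * x := by
      apply setIntegral_congr_fun measurableSet_Ioc
      intro x hx; simp only [min_eq_left hx.2]
    have e2 : (∫ x in Ioi A, Real.exp (-x) * min x A)
        = ∫ x in Ioi A, Real.exp (-x) * A := by
      apply setIntegral_congr_fun measurableSet_Ioi
      intro x hx; simp only [min_eq_right (le_of_lt (mem_Ioi.mp hx))]
    have e3 : (∫ x in Ioi A, Real.exp (-x) * A) = Real.exp (-A) * A := by
      rw [integral_mul_const, integral_exp_neg_Ioi]
    have e4 : (∫ x in Ioc (0:ℝ) A, Real.exp (-x) * x) = 1 - (A + 1) * Real.exp (-A) := by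
      rw [← intervalIntegral.integral_of_le hA0]
      have hderiv : ∀ y ∈ uIcc (0:ℝ) A,
          HasDerivAt (fun x : ℝ => -((x + 1) * Real.exp (-x))) (Real.exp (-y) * y) y := by
        intro y _
        have h1 : HasDerivAt (fun x : ℝ => x + 1) 1 y := (hasDerivAt_id y).add_const 1
        have h2 : HasDerivAt (fun x : ℝ => Real.exp (-x)) (-Real.exp (-y)) y := by
          simpa using (hasDerivAt_neg y).exp
        have : HasDerivAt (fun x : ℝ => -((x + 1) * Real.exp (-x)))
            (-(1 * Real.exp (-y) + (y + 1) * -Real.exp (-y))) y := (h1.mul h2).neg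
        convert this using 1
        ring
      rw [intervalIntegral.integral_eq_sub_of_hasDerivAt hderiv
        (((Real.continuous_exp.comp continuous_neg).mul continuous_id).intervalIntegrable _ _)]
      simp [Real.exp_zero]
      ring
    rw [e1, e2, e3, e4]
    ring
  -- put things together
  have main : (∫⁻ s in Ioc t τ, ENNReal.ofReal (σ s * Real.exp (-(F s))))
      ≤ ENNReal.ofReal (1 - Real.exp (-A)) := by
    calc (∫⁻ s in Ioc t τ, ENNReal.ofReal (σ s * Real.exp (-(F s))))
        = ∫⁻ s in Ioc t τ, ∫⁻ x in Ioi (0:ℝ), g (s, x) :=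
          (setLIntegral_congr_fun measurableSet_Ioc
            (fun s hs => (step1 s hs))).symm
      _ = ∫⁻ x in Ioi (0:ℝ), ∫⁻ s in Ioc t τ, g (s, x) :=
          lintegral_lintegral_swap hgmeas.aemeasurable
      _ ≤ ∫⁻ x in Ioi (0:ℝ), ENNReal.ofReal (Real.exp (-x) * min x A) := by
          apply lintegral_mono_ae
          filter_upwards [ae_restrict_mem measurableSet_Ioi] with x hx
          exact step2 x hx
      _ = ENNReal.ofReal (∫ x in Ioi (0:ℝ), Real.exp (-x) * min x A) :=
          (ofReal_integral_eq_lintegral_ofReal hminint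
            (by filter_upwards [ae_restrict_mem measurableSet_Ioi] with x hx
                exact mul_nonneg (Real.exp_pos _).le (le_min (le_of_lt hx) hA0))).symm
      _ = ENNReal.ofReal (1 - Real.exp (-A)) := by rw [hcalc]
  -- convert back to a real inequality
  have hIone : IntegrableOn (fun s => σ s * Real.exp (-(F s))) (Ioc t τ) volume := by
    apply Integrable.mono' (integrableOn_const (C := S) measure_Ioc_lt_top.ne)
    · exact (hm.mul ((Real.continuous_exp.measurable).comp
        (hFcont.measurable.neg))).aestronglyMeasurable
    · filter_upwards [ae_restrict_mem measurableSet_Ioc] with s hs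
      rw [Real.norm_eq_abs, abs_of_nonneg (mul_nonneg (h0 s) (Real.exp_pos _).le)]
      calc σ s * Real.exp (-(F s)) ≤ σ s * 1 := by
            apply mul_le_mul_of_nonneg_left _ (h0 s)
            rw [← Real.exp_zero]
            exact Real.exp_le_exp.mpr (neg_nonpos.mpr (hFnonneg s hs.1.le))
        _ = σ s := mul_one _
        _ ≤ S := hS s
  have h1A : 0 ≤ 1 - Real.exp (-A) := by
    have : Real.exp (-A) ≤ 1 := by
      rw [← Real.exp_zero]; exact Real.exp_le_exp.mpr (neg_nonpos.mpr hA0)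
    linarith
  have hofReal : ENNReal.ofReal (∫ s in t..τ, σ s * Real.exp (-(F s)))
      ≤ ENNReal.ofReal (1 - Real.exp (-A)) := by
    rw [intervalIntegral.integral_of_le ht,
      ofReal_integral_eq_lintegral_ofReal hIone
        (Filter.Eventually.of_forall fun s => mul_nonneg (h0 s) (Real.exp_pos _).le)]
    exact main
  have := (ENNReal.ofReal_le_ofReal_iff h1A).mp hofReal
  exact this

/-- Trajectory-coordinate form of the key estimate
`‖T₁T₀⁻¹f‖_{L¹} ≤ (1 − e^{−‖σ_p‖_∞ ‖τ‖_∞}) ‖f‖_{L¹}`. -/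
theorem T1_T0_inverse_bound {Γ : Type*} [MeasurableSpace Γ]
    (μ : Measure Γ) [SigmaFinite μ]
    (τ : Γ → ℝ) (hτ_meas : Measurable τ) (hτ_pos : ∀ γ, 0 < τ γ)
    (T₀ : ℝ) (hτ_bdd : ∀ᵐ γ ∂μ, τ γ ≤ T₀)
    (σ : Γ → ℝ → ℝ) (hσ_meas : Measurable (Function.uncurry σ))
    (hσ_nonneg : ∀ γ t, 0 ≤ σ γ t)
    (S₀ : ℝ) (hσ_bdd : ∀ᵐ p ∂(μ.prod volume), σ p.1 p.2 ≤ S₀)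
    (f : Γ → ℝ → ℝ) (hf_meas : Measurable (Function.uncurry f))
    (hf : (∫⁻ γ, (∫⁻ t in Set.Ioc 0 (τ γ), ENNReal.ofReal |f γ t|) ∂μ) < ⊤) :
    ∫⁻ γ, (∫⁻ t in Set.Ioc 0 (τ γ),
        ENNReal.ofReal ((∫ s in t..(τ γ), σ γ s * Real.exp (-(∫ u in t..s, σ γ u))) * |f γ t|)) ∂μ
      ≤ ENNReal.ofReal (1 - Real.exp (-(S₀ * T₀))) *
          ∫⁻ γ, (∫⁻ t in Set.Ioc 0 (τ γ), ENNReal.ofReal |f γ t|) ∂μ := by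
  set C : ℝ≥0∞ := ENNReal.ofReal (1 - Real.exp (-(S₀ * T₀))) with hCdef
  have hae : ∀ᵐ γ ∂μ, ∀ᵐ s ∂(volume : Measure ℝ), σ γ s ≤ S₀ :=
    Measure.ae_ae_of_ae_prod hσ_bdd
  have hmain : ∀ᵐ γ ∂μ,
      (∫⁻ t in Set.Ioc 0 (τ γ),
        ENNReal.ofReal ((∫ s in t..(τ γ), σ γ s * Real.exp (-(∫ u in t..s, σ γ u))) * |f γ t|))
      ≤ C * ∫⁻ t in Set.Ioc 0 (τ γ), ENNReal.ofReal |f γ t| := by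
    filter_upwards [hτ_bdd, hae] with γ hτγ hσγ
    -- S₀ is nonnegative
    obtain ⟨s₀, hs₀⟩ := hσγ.exists
    have hS₀ : 0 ≤ S₀ := le_trans (hσ_nonneg γ s₀) hs₀
    have hmγ : Measurable (σ γ) := hσ_meas.comp measurable_prodMk_left
    set σ' : ℝ → ℝ := fun s => min (σ γ s) S₀ with hσ'def
    have hmσ' : Measurable σ' := hmγ.min measurable_const
    have h0σ' : ∀ s, 0 ≤ σ' s := fun s => le_min (hσ_nonneg γ s) hS₀
    have hSσ' : ∀ s, σ' s ≤ S₀ := fun s => min_le_right _ _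
    have haeq : ∀ᵐ s ∂(volume : Measure ℝ), σ γ s = σ' s := by
      filter_upwards [hσγ] with s hs
      simp [hσ'def, min_eq_left hs]
    have hFeq : ∀ a b : ℝ, (∫ u in a..b, σ γ u) = ∫ u in a..b, σ' u := fun a b =>
      intervalIntegral.integral_congr_ae (by filter_upwards [haeq] with u hu _ using hu)
    -- pointwise bound on the kernel integral
    have hker : ∀ t ∈ Set.Ioc 0 (τ γ),
        (∫ s in t..(τ γ), σ γ s * Real.exp (-(∫ u in t..s, σ γ u)))
          ≤ 1 - Real.exp (-(S₀ * T₀)) := by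
      intro t htmem
      have htτ : t ≤ τ γ := htmem.2
      have hKeq : (∫ s in t..(τ γ), σ γ s * Real.exp (-(∫ u in t..s, σ γ u)))
          = ∫ s in t..(τ γ), σ' s * Real.exp (-(∫ u in t..s, σ' u)) := by
        apply intervalIntegral.integral_congr_ae
        filter_upwards [haeq] with s hs _
        rw [hs, hFeq t s]
      have hkey := key σ' hmσ' S₀ h0σ' hSσ' t (τ γ) htτ
      have hFbd : (∫ u in t..(τ γ), σ' u) ≤ S₀ * T₀ := by
        have h1 : |∫ u in t..(τ γ), σ' u| ≤ S₀ * |τ γ - t| := by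
          rw [← Real.norm_eq_abs (∫ u in t..(τ γ), σ' u)]
          apply intervalIntegral.norm_integral_le_of_norm_le_const
          intro u _
          rw [Real.norm_eq_abs, abs_of_nonneg (h0σ' u)]
          exact hSσ' u
        have h2 : |τ γ - t| = τ γ - t := abs_of_nonneg (by linarith)
        have h3 : S₀ * (τ γ - t) ≤ S₀ * T₀ := by
          apply mul_le_mul_of_nonneg_left _ hS₀
          have := htmem.1
          linarith
        calc (∫ u in t..(τ γ), σ' u) ≤ |∫ u in t..(τ γ), σ' u| := le_abs_self _
          _ ≤ S₀ * |τ γ - t| := h1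
          _ = S₀ * (τ γ - t) := by rw [h2]
          _ ≤ S₀ * T₀ := h3
      have hexp : Real.exp (-(S₀ * T₀)) ≤ Real.exp (-(∫ u in t..(τ γ), σ' u)) :=
        Real.exp_le_exp.mpr (by linarith)
      rw [hKeq]
      linarith
    have hker0 : ∀ t ∈ Set.Ioc 0 (τ γ),
        0 ≤ ∫ s in t..(τ γ), σ γ s * Real.exp (-(∫ u in t..s, σ γ u)) := by
      intro t htmem
      exact intervalIntegral.integral_nonneg htmem.2
        (fun s _ => mul_nonneg (hσ_nonneg γ s) (Real.exp_pos _).le)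
    calc (∫⁻ t in Set.Ioc 0 (τ γ),
          ENNReal.ofReal ((∫ s in t..(τ γ), σ γ s * Real.exp (-(∫ u in t..s, σ γ u))) * |f γ t|))
        ≤ ∫⁻ t in Set.Ioc 0 (τ γ), C * ENNReal.ofReal |f γ t| := by
          apply lintegral_mono_ae
          filter_upwards [ae_restrict_mem measurableSet_Ioc] with t ht
          rw [ENNReal.ofReal_mul (hker0 t ht)]
          exact mul_le_mul_left (ENNReal.ofReal_le_ofReal (hker t ht)) _
      _ = C * ∫⁻ t in Set.Ioc 0 (τ γ), ENNReal.ofReal |f γ t| :=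
          lintegral_const_mul' _ _ ENNReal.ofReal_ne_top
  calc (∫⁻ γ, (∫⁻ t in Set.Ioc 0 (τ γ),
        ENNReal.ofReal ((∫ s in t..(τ γ), σ γ s * Real.exp (-(∫ u in t..s, σ γ u))) * |f γ t|)) ∂μ)
      ≤ ∫⁻ γ, C * (∫⁻ t in Set.Ioc 0 (τ γ), ENNReal.ofReal |f γ t|) ∂μ :=
        lintegral_mono_ae hmain
    _ = C * ∫⁻ γ, (∫⁻ t in Set.Ioc 0 (τ γ), ENNReal.ofReal |f γ t|) ∂μ :=
        lintegral_const_mul' _ _ ENNReal.ofReal_ne_top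
end
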